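/- Let p be a prime number and let A be an 𝔽_p-brace of cardinality p^4 (so that A^5 = 0). Then for all a, b, c ∈ A one has (a^{-1}∘b^{-1}∘a∘b)*c = a*(b*c) − b*(a*c) + a*(b*(a*c)) + b*(b*(a*c)) − b*(a*(b*c)) − a*(a*(b*c)), where a^{-1} denotes the inverse of a in the group (A,∘). -/

import Mathlib

/-- A left brace: `(A, +)` an abelian group, `(A, *)` a group (we write the brace
multiplication `∘` as `*`), with `a * (b + c) + a = a * b + a * c`. -/
class LeftBrace (A : Type*) extends Group A, AddCommGroup A where
  mul_add_eq : ∀ a b c : A, a * (b + c) + a = a * b + a * c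

namespace LeftBrace

/-- The star operation `a * b = a∘b - a - b` of a left brace. -/
def star {A : Type*} [LeftBrace A] (a b : A) : A := a * b - a - b

end LeftBrace

/-- An `𝔽ₚ`-brace: a left brace whose additive group is a `ZMod p`-vector space
with `a * (α • b) = α • (a * b)`. -/
class FpBrace (p : ℕ) (A : Type*) extends LeftBrace A, Module (ZMod p) A where
  star_smul' : ∀ (α : ZMod p) (a b : A),
    LeftBrace.star a (α • b) = α • LeftBrace.star a b

/-- The left chain `A^1 = A`, `A^{i+1} = A * A^i` (additive subgroup generated by
`a * b`, `a ∈ A`, `b ∈ A^i`). -/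
def lpow (A : Type*) [LeftBrace A] : ℕ → AddSubgroup A
  | 0 => ⊤
  | 1 => ⊤
  | (n+2) => AddSubgroup.closure
      {x : A | ∃ a : A, ∃ b ∈ lpow A (n+1), x = LeftBrace.star a b}

/-- The right chain `A^{(1)} = A`, `A^{(i+1)} = A^{(i)} * A`. -/
def rpow (A : Type*) [LeftBrace A] : ℕ → AddSubgroup A
  | 0 => ⊤
  | 1 => ⊤
  | (n+2) => AddSubgroup.closure
      {x : A | ∃ a ∈ rpow A (n+1), ∃ b : A, x = LeftBrace.star a b}

/-- A left brace is right nilpotent if `A^{(n)} = 0` for some `n`. -/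
def IsRightNilpotent (A : Type*) [LeftBrace A] : Prop := ∃ n, rpow A n = ⊥

/-- The defining relations of the group XV on generators `P, Q, R, S`. -/
def XVRelations {A : Type*} [LeftBrace A] (p : ℕ) (P Q R S : A) : Prop :=
  Q * S = S * Q * P ∧ Q * R = R * Q ∧ P * S = S * P ∧ P * Q = Q * P ∧
  P * R = R * P ∧ R * S = S * R * Q ∧
  P ^ p = 1 ∧ Q ^ p = 1 ∧ R ^ p = 1 ∧ S ^ p = 1

/-- The multiplicative group of the brace `A` is the group XV, with generators
`P, Q, R, S` satisfying the XV relations. -/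
def IsXVBrace (p : ℕ) (A : Type*) [LeftBrace A] (P Q R S : A) : Prop :=
  Nat.card A = p ^ 4 ∧ Subgroup.closure {P, Q, R, S} = ⊤ ∧ XVRelations p P Q R S


/-- The Multiplicative Table with parameters `y, i, k`. -/
def MultTable {p : ℕ} {A : Type*} [LeftBrace A] [Module (ZMod p) A]
    (P Q R S : A) (y i k : ZMod p) : Prop :=
  LeftBrace.star P P = 0 ∧ LeftBrace.star P Q = 0 ∧
  LeftBrace.star P R = y • S ∧ LeftBrace.star P S = 0 ∧
  LeftBrace.star Q P = 0 ∧ LeftBrace.star Q Q = -(y • S) ∧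
  LeftBrace.star Q R = ((2 : ZMod p)⁻¹ * y) • S ∧ LeftBrace.star Q S = 0 ∧
  LeftBrace.star R P = y • S ∧ LeftBrace.star R Q = ((2 : ZMod p)⁻¹ * y) • S ∧
  LeftBrace.star R R = i • P + k • S ∧ LeftBrace.star R S = 0 ∧
  LeftBrace.star S P = 0 ∧ LeftBrace.star S Q = -P ∧
  LeftBrace.star S R = -Q + P - ((2 : ZMod p)⁻¹ * y) • S ∧ LeftBrace.star S S = 0

/-- Additive subgroup generated by all `x * y`, `x ∈ X`, `y ∈ Y`. -/
def starSpan {A : Type*} [LeftBrace A] (X Y : AddSubgroup A) : AddSubgroup A :=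
  AddSubgroup.closure {z : A | ∃ x ∈ X, ∃ y ∈ Y, z = LeftBrace.star x y}

/-- An ideal of a left brace: an additive subgroup closed under all `λ_a` and
normal in `(A, ∘)`. -/
def IsBraceIdeal {A : Type*} [LeftBrace A] (I : AddSubgroup A) : Prop :=
  (∀ a : A, ∀ b ∈ I, a * b - a ∈ I) ∧ (∀ a : A, ∀ b ∈ I, a * b * a⁻¹ ∈ I)

/-- A brace is prime if the product of any two nonzero ideals is nonzero. -/
def IsPrimeBrace (A : Type*) [LeftBrace A] : Prop :=
  ∀ I J : AddSubgroup A, IsBraceIdeal I → IsBraceIdeal J → I ≠ ⊥ → J ≠ ⊥ →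
    starSpan I J ≠ ⊥

/-- Left chain of a nonassociative algebra given by a bilinear map. -/
def preLieL (R : Type*) [CommRing R] (V : Type*) [AddCommGroup V] [Module R V]
    (mul : V →ₗ[R] V →ₗ[R] V) : ℕ → Submodule R V
  | 0 => ⊤
  | 1 => ⊤
  | (n+2) => Submodule.span R
      {x : V | ∃ a : V, ∃ b ∈ preLieL R V mul (n+1), x = mul a b}

/-- Right chain of a nonassociative algebra given by a bilinear map. -/
def preLieR (R : Type*) [CommRing R] (V : Type*) [AddCommGroup V] [Module R V]
    (mul : V →ₗ[R] V →ₗ[R] V) : ℕ → Submodule R V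
  | 0 => ⊤
  | 1 => ⊤
  | (n+2) => Submodule.span R
      {x : V | ∃ a ∈ preLieR R V mul (n+1), ∃ b : V, x = mul a b}

/-- The defining relations of the group XIV on generators `P, Q, R, S`. -/
def XIVRelations {A : Type*} [LeftBrace A] (p : ℕ) (P Q R S : A) : Prop :=
  Q * P = P * Q ∧ Q * R = R * Q ∧ Q * S = S * Q ∧
  P * R = R * P ∧ P * S = S * P ∧ R * S = S * R * P ∧
  P ^ p = 1 ∧ Q ^ p = 1 ∧ R ^ p = 1 ∧ S ^ p = 1

section BraceBasic

open LeftBrace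

variable {A : Type*} [LeftBrace A]

lemma brace_mul_zero (a : A) : a * (0 : A) = a := by
  have h := LeftBrace.mul_add_eq a 0 0
  rw [add_zero] at h
  exact (add_left_cancel h).symm

lemma brace_zero_eq_one : (0 : A) = 1 := by
  have h := brace_mul_zero (1 : A)
  rwa [one_mul] at h

/-- The lambda map of a left brace. -/
def blam (a x : A) : A := a * x - a

lemma blam_add (a x y : A) : blam a (x + y) = blam a x + blam a y := by
  have h := LeftBrace.mul_add_eq a x y
  unfold blam
  rw [eq_sub_of_add_eq h]
  abel

lemma blam_zero (a : A) : blam a 0 = 0 := by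
  simp [blam, brace_mul_zero]

lemma blam_neg (a x : A) : blam a (-x) = - blam a x := by
  have h : blam a x + blam a (-x) = 0 := by
    rw [← blam_add]
    simp [blam_zero]
  exact (neg_eq_of_add_eq_zero_right h).symm

lemma blam_sub (a x y : A) : blam a (x - y) = blam a x - blam a y := by
  rw [sub_eq_add_neg, blam_add, blam_neg, sub_eq_add_neg]

lemma brace_mul_neg (a b : A) : a * (-b) = a + a - a * b := by
  have h := LeftBrace.mul_add_eq a b (-b)
  have hb : b + -b = (0 : A) := by abel
  rw [hb, brace_mul_zero] at h
  rw [h]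
  abel

lemma blam_mul (a b x : A) : blam (a * b) x = blam a (blam b x) := by
  have h := eq_sub_of_add_eq (LeftBrace.mul_add_eq a (b * x) (-b))
  unfold blam
  rw [sub_eq_add_neg (b * x) b, h, brace_mul_neg, mul_assoc]
  abel

lemma blam_one (x : A) : blam 1 x = x := by
  unfold blam
  rw [one_mul, ← brace_zero_eq_one, sub_zero]

lemma blam_inv (a x : A) : blam a⁻¹ (blam a x) = x := by
  rw [← blam_mul, inv_mul_cancel, blam_one]

lemma blam_inv' (a x : A) : blam a (blam a⁻¹ x) = x := by
  rw [← blam_mul, mul_inv_cancel, blam_one]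

lemma bstar_eq (a x : A) : star a x = blam a x - x := rfl

lemma blam_eq (a x : A) : blam a x = x + star a x := by
  rw [bstar_eq]; abel

lemma bstar_add (a x y : A) : star a (x + y) = star a x + star a y := by
  rw [bstar_eq, bstar_eq, bstar_eq, blam_add]; abel

lemma bstar_zero_right (a : A) : star a 0 = 0 := by
  rw [bstar_eq, blam_zero, sub_zero]

lemma bstar_neg (a x : A) : star a (-x) = - star a x := by
  rw [bstar_eq, bstar_eq, blam_neg]; abel

lemma bstar_sub (a x y : A) : star a (x - y) = star a x - star a y := by
  rw [sub_eq_add_neg, bstar_add, bstar_neg, sub_eq_add_neg]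

lemma lpow_one_eq_top : lpow A 1 = ⊤ := rfl

lemma bstar_mem_lpow {n : ℕ} {x : A} (hx : x ∈ lpow A n) (a : A) :
    star a x ∈ lpow A (n + 1) := by
  match n with
  | 0 => exact AddSubgroup.mem_top _
  | (m+1) => exact AddSubgroup.subset_closure ⟨a, x, hx, rfl⟩

lemma lpow_succ_le (A : Type*) [LeftBrace A] : ∀ n : ℕ, lpow A (n + 1) ≤ lpow A n := by
  intro n
  induction n with
  | zero => exact le_top
  | succ m ih =>
    cases m with
    | zero => exact le_top
    | succ k =>
      refine (AddSubgroup.closure_le _).2 ?_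
      rintro x ⟨a, b, hb, rfl⟩
      exact AddSubgroup.subset_closure ⟨a, b, ih hb, rfl⟩

lemma blam_mem_lpow {n : ℕ} (a : A) {x : A} (hx : x ∈ lpow A n) :
    blam a x ∈ lpow A n := by
  rw [blam_eq]
  exact add_mem hx (lpow_succ_le A n (bstar_mem_lpow hx a))

end BraceBasic


instance addAutGroupMul (M : Type*) [Add M] : Group (AddAut M) where
  mul f g := g.trans f
  one := AddEquiv.refl M
  inv := AddEquiv.symm
  mul_assoc _ _ _ := rfl
  one_mul _ := rfl
  mul_one _ := rfl
  inv_mul_cancel f := AddEquiv.ext fun x => f.symm_apply_apply x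

section Coinv

open MulAction

lemma coinv_ne_top {p : ℕ} (hp : p.Prime) {G : Type*} [Group G] (hG : IsPGroup p G)
    (n : ℕ) :
    ∀ (M : Type*) (_iM : AddCommGroup M) (_iF : Finite M), Nat.card M = n → Nontrivial M →
      (∀ m : M, p • m = 0) → ∀ φ : G →* AddAut M,
      AddSubgroup.closure {x : M | ∃ g m, x = φ g m - m} ≠ ⊤ := by
  induction n using Nat.strong_induction_on with
  | _ n ih =>
    intro M iM iF hn hnt hexp φ
    classical
    haveI : Fact p.Prime := ⟨hp⟩
    letI : MulAction G M :=
      { smul := fun g m => φ g m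
        one_smul := fun m => by show φ 1 m = m; rw [map_one]; rfl
        mul_smul := fun g h m => by
          show φ (g * h) m = φ g (φ h m); rw [map_mul]; rfl }
    have smul_def : ∀ (g : G) (m : M), g • m = φ g m := fun _ _ => rfl
    let F : AddSubgroup M :=
      { carrier := {m : M | ∀ g : G, φ g m = m}
        zero_mem' := fun g => by simp
        add_mem' := fun {x y} hx hy g => by rw [map_add, hx g, hy g]
        neg_mem' := fun {x} hx g => by rw [map_neg, hx g] }
    have memF : ∀ x : M, x ∈ F ↔ ∀ g : G, φ g x = x := fun x => Iff.rfl
    have hpM : IsPGroup p (Multiplicative M) := by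
      intro m
      refine ⟨1, ?_⟩
      rw [pow_one]
      apply Multiplicative.toAdd.injective
      rw [toAdd_pow, toAdd_one]
      exact hexp _
    have hpcard : p ∣ Nat.card M := by
      have hcardM : Nat.card (Multiplicative M) = Nat.card M :=
        Nat.card_congr Multiplicative.toAdd
      haveI : Nontrivial (Multiplicative M) := hnt
      haveI : Finite (Multiplicative M) := iF
      obtain ⟨k, hk0, hk⟩ := hpM.nontrivial_iff_card.mp inferInstance
      rw [hcardM] at hk
      rw [hk]
      exact dvd_pow_self p hk0.ne'
    have h0fix : (0 : M) ∈ fixedPoints G M := by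
      intro g
      rw [smul_def, map_zero]
    obtain ⟨m₀, hm₀fix, hm₀ne⟩ :=
      hG.exists_fixed_point_of_prime_dvd_card_of_fixed_point (α := M) hpcard h0fix
    have hm₀F : m₀ ∈ F := fun g => hm₀fix g
    by_cases hF : F = ⊤
    · intro hC
      have hsub : ∀ x ∈ {x : M | ∃ g m, x = φ g m - m}, x ∈ (⊥ : AddSubgroup M) := by
        rintro x ⟨g, m, rfl⟩
        have hm : m ∈ F := hF ▸ AddSubgroup.mem_top m
        rw [AddSubgroup.mem_bot, hm g, sub_self]
      have hle : AddSubgroup.closure {x : M | ∃ g m, x = φ g m - m} ≤ ⊥ :=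
        (AddSubgroup.closure_le _).2 hsub
      rw [hC] at hle
      obtain ⟨u, v, huv⟩ := hnt
      have hu : u = 0 := AddSubgroup.mem_bot.mp (hle (AddSubgroup.mem_top u))
      have hv : v = 0 := AddSubgroup.mem_bot.mp (hle (AddSubgroup.mem_top v))
      exact huv (hu.trans hv.symm)
    · have hcomap : ∀ g : G, F ≤ F.comap (φ g).toAddMonoidHom := by
        intro g x hx
        rw [AddSubgroup.mem_comap]
        intro h
        show φ h ((φ g).toAddMonoidHom x) = (φ g).toAddMonoidHom x
        show φ h (φ g x) = φ g x
        rw [hx g]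
        exact hx h
      let π := QuotientAddGroup.mk' F
      let f : G → (M ⧸ F) →+ (M ⧸ F) := fun g =>
        QuotientAddGroup.map F F (φ g).toAddMonoidHom (hcomap g)
      have hf : ∀ (g : G) (m : M), f g (π m) = π (φ g m) := fun g m => rfl
      have hff : ∀ (g h : G) (q : M ⧸ F), f g (f h q) = f (g * h) q := by
        intro g h q
        induction q using QuotientAddGroup.induction_on with
        | H m =>
          show f g (f h (π m)) = f (g * h) (π m)
          rw [hf, hf, hf, map_mul]
          rfl
      have hf1 : ∀ q : M ⧸ F, f 1 q = q := by
        intro q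
        induction q using QuotientAddGroup.induction_on with
        | H m =>
          show f 1 (π m) = π m
          rw [hf, map_one]
          rfl
      let φ' : G →* AddAut (M ⧸ F) :=
        { toFun := fun g =>
            { toFun := f g
              invFun := f g⁻¹
              left_inv := fun q => by rw [hff, inv_mul_cancel, hf1]
              right_inv := fun q => by rw [hff, mul_inv_cancel, hf1]
              map_add' := (f g).map_add }
          map_one' := by
            ext q
            exact hf1 q
          map_mul' := fun g h => by
            ext q
            exact (hff g h q).symm }
      have hφ' : ∀ (g : G) (m : M), φ' g (π m) = π (φ g m) := fun g m => hf g m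
      obtain ⟨m₁, hm₁⟩ : ∃ m : M, m ∉ F := by
        by_contra h
        push_neg at h
        exact hF (((AddSubgroup.eq_top_iff' F).mpr h))
      have hnt' : Nontrivial (M ⧸ F) := by
        refine ⟨π m₁, 0, fun h => hm₁ ?_⟩
        exact (QuotientAddGroup.eq_zero_iff m₁).mp h
      have hexp' : ∀ q : M ⧸ F, p • q = 0 := by
        intro q
        induction q using QuotientAddGroup.induction_on with
        | H m => rw [show ((m : M ⧸ F)) = π m from rfl, ← map_nsmul π, hexp, map_zero]
      haveI : Nontrivial F := ⟨⟨0, F.zero_mem⟩, ⟨m₀, hm₀F⟩, fun h =>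
        hm₀ne (congrArg Subtype.val h)⟩
      have hlt : Nat.card (M ⧸ F) < n := by
      
        have hcards := AddSubgroup.card_eq_card_quotient_mul_card_addSubgroup F
        rw [hn] at hcards
        have h2 : 2 ≤ Nat.card F := Finite.one_lt_card
        have h1 : 1 ≤ Nat.card (M ⧸ F) := Nat.one_le_iff_ne_zero.mpr Nat.card_pos.ne'
        calc Nat.card (M ⧸ F) < Nat.card (M ⧸ F) * 2 := by omega
          _ ≤ Nat.card (M ⧸ F) * Nat.card F := Nat.mul_le_mul_left _ h2
          _ = n := hcards.symm
      have hC' := ih (Nat.card (M ⧸ F)) hlt (M ⧸ F) inferInstance inferInstance rfl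
        hnt' hexp' φ'
      intro hC
      apply hC'
      have hsurj : Function.Surjective π := QuotientAddGroup.mk'_surjective F
      have hkey : AddSubgroup.closure {x : M | ∃ g m, x = φ g m - m}
          ≤ (AddSubgroup.closure {x : M ⧸ F | ∃ g q, x = φ' g q - q}).comap π := by
        refine (AddSubgroup.closure_le _).2 ?_
        rintro x ⟨g, m, rfl⟩
        have hx : π (φ g m - m) = φ' g (π m) - π m := by
          rw [map_sub, hφ']
        rw [SetLike.mem_coe, AddSubgroup.mem_comap, hx]
        exact AddSubgroup.subset_closure ⟨g, π m, rfl⟩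
      rw [eq_top_iff]
      rintro q -
      obtain ⟨m, rfl⟩ := hsurj q
      exact hkey (hC ▸ AddSubgroup.mem_top m)

end Coinv


section Strict

open LeftBrace

variable {p : ℕ} {A : Type*} [FpBrace p A]

lemma brace_p_smul (x : A) : p • x = 0 := by
  have h : ((p : ZMod p)) • x = p • x := Nat.cast_smul_eq_nsmul (ZMod p) p x
  rw [ZMod.natCast_self, zero_smul] at h
  exact h.symm

lemma starSet_closure_ne (hp : p.Prime) (hcard : Nat.card A = p ^ 4)
    (V : AddSubgroup A) (hV : V ≠ ⊥)
    (hinv : ∀ a x : A, x ∈ V → blam a x ∈ V) :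
    AddSubgroup.closure {x : A | ∃ a : A, ∃ v ∈ V, x = star a v} ≠ V := by
  haveI : Finite A := Nat.finite_of_card_ne_zero (by
    rw [hcard]; exact pow_ne_zero _ hp.pos.ne')
  have hG : IsPGroup p A := IsPGroup.of_card hcard
  haveI : Nontrivial V := V.nontrivial_iff_ne_bot.mpr hV
  let φ : A →* AddAut V :=
    { toFun := fun a =>
        { toFun := fun x => ⟨blam a x, hinv a x x.2⟩
          invFun := fun x => ⟨blam a⁻¹ x, hinv a⁻¹ x x.2⟩
          left_inv := fun x => Subtype.ext (blam_inv a x)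
          right_inv := fun x => Subtype.ext (blam_inv' a x)
          map_add' := fun x y => Subtype.ext (blam_add a x y) }
      map_one' := AddEquiv.ext fun x => Subtype.ext (blam_one (x : A))
      map_mul' := fun a b => AddEquiv.ext fun x => Subtype.ext (blam_mul a b (x : A)) }
  have hexp : ∀ m : V, p • m = 0 := by
    intro m
    refine Subtype.ext ?_
    rw [show ((p • m : V) : A) = p • (m : A) from map_nsmul V.subtype p m]
    exact brace_p_smul (m : A)
  have hC := coinv_ne_top hp hG (Nat.card V) V inferInstance inferInstance rfl
    inferInstance hexp φ
  intro hEq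
  apply hC
  apply AddSubgroup.map_injective V.subtype_injective
  rw [AddMonoidHom.map_closure]
  have himg : V.subtype '' {x : V | ∃ g m, x = φ g m - m}
      = {x : A | ∃ a : A, ∃ v ∈ V, x = star a v} := by
    ext x
    constructor
    · rintro ⟨y, ⟨g, m, rfl⟩, rfl⟩
      exact ⟨g, m, m.2, rfl⟩
    · rintro ⟨a, v, hv, rfl⟩
      exact ⟨φ a ⟨v, hv⟩ - ⟨v, hv⟩, ⟨a, ⟨v, hv⟩, rfl⟩, rfl⟩
  rw [himg, hEq, ← AddMonoidHom.range_eq_map, AddSubgroup.range_subtype]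

lemma lpow_five_eq_bot (hp : p.Prime) (hcard : Nat.card A = p ^ 4) :
    lpow A 5 = ⊥ := by
  haveI : Finite A := Nat.finite_of_card_ne_zero (by
    rw [hcard]; exact pow_ne_zero _ hp.pos.ne')
  by_contra h5
  have hadd : ∀ m k : ℕ, lpow A (m + k) ≤ lpow A m := by
    intro m k
    induction k with
    | zero => exact le_rfl
    | succ j ih => exact (lpow_succ_le A (m + j)).trans ih
  have hne : ∀ n, n ≤ 5 → lpow A n ≠ ⊥ := by
    intro n hn hbot
    apply h5
    have h := hadd n (5 - n)
    rw [Nat.add_sub_cancel' hn] at h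
    exact le_bot_iff.mp (hbot ▸ h)
  have hstrict : ∀ n, 1 ≤ n → n ≤ 4 → lpow A (n + 1) < lpow A n := by
    intro n h1 h4
    obtain ⟨m, rfl⟩ := Nat.exists_eq_add_of_le h1
    have heq : lpow A (1 + m + 1) =
        AddSubgroup.closure {x : A | ∃ a : A, ∃ v ∈ lpow A (1 + m), x = star a v} := by
      rw [show 1 + m + 1 = m + 2 by omega]
      rw [show (1 + m) = m + 1 by omega]
      rfl
    refine lt_of_le_of_ne (lpow_succ_le A (1 + m)) ?_
    rw [heq]
    exact starSet_closure_ne hp hcard _ (hne (1 + m) (by omega))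
      (fun a x hx => blam_mem_lpow a hx)
  have hcardlt : ∀ n, 1 ≤ n → n ≤ 4 →
      Nat.card (lpow A (n + 1)) < Nat.card (lpow A n) := by
    intro n h1 h4
    have h := hstrict n h1 h4
    have hsub : ((lpow A (n + 1) : Set A)) ⊂ (lpow A n : Set A) :=
      SetLike.coe_ssubset_coe.mpr h
    calc Nat.card (lpow A (n + 1)) = ((lpow A (n + 1) : Set A)).ncard :=
          Nat.card_coe_set_eq _
      _ < ((lpow A n : Set A)).ncard := Set.ncard_lt_ncard hsub (Set.toFinite _)
      _ = Nat.card (lpow A n) := (Nat.card_coe_set_eq _).symm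
  have hdvd : ∀ n, Nat.card (lpow A n) ∣ p ^ 4 := fun n =>
    hcard ▸ AddSubgroup.card_addSubgroup_dvd_card (lpow A n)
  have hc1 : Nat.card (lpow A 1) = p ^ 4 := by
    rw [show lpow A 1 = ⊤ from rfl, ← hcard]
    exact Nat.card_congr AddSubgroup.topEquiv.toEquiv
  have hc5 : 2 ≤ Nat.card (lpow A 5) := by
    haveI : Nontrivial (lpow A 5) :=
      (lpow A 5).nontrivial_iff_ne_bot.mpr h5
    exact Finite.one_lt_card
  obtain ⟨e2, -, he2⟩ := (Nat.dvd_prime_pow hp).mp (hdvd 2)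
  obtain ⟨e3, -, he3⟩ := (Nat.dvd_prime_pow hp).mp (hdvd 3)
  obtain ⟨e4, -, he4⟩ := (Nat.dvd_prime_pow hp).mp (hdvd 4)
  obtain ⟨e5, -, he5⟩ := (Nat.dvd_prime_pow hp).mp (hdvd 5)
  have l1 := hcardlt 1 le_rfl (by omega)
  have l2 := hcardlt 2 (by omega) (by omega)
  have l3 := hcardlt 3 (by omega) (by omega)
  have l4 := hcardlt 4 (by omega) (by omega)
  rw [hc1, he2] at l1
  rw [he2, he3] at l2
  rw [he3, he4] at l3
  rw [he4, he5] at l4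
  rw [he5] at hc5
  have hp1 : 1 < p := hp.one_lt
  have g1 : e2 < 4 := (Nat.pow_lt_pow_iff_right hp1).mp l1
  have g2 : e3 < e2 := (Nat.pow_lt_pow_iff_right hp1).mp l2
  have g3 : e4 < e3 := (Nat.pow_lt_pow_iff_right hp1).mp l3
  have g4 : e5 < e4 := (Nat.pow_lt_pow_iff_right hp1).mp l4
  have g5 : e5 ≠ 0 := by
    intro h
    rw [h, pow_zero] at hc5
    omega
  omega

end Strict


open LeftBrace in
/-- the commutator formula for the star operation in an `𝔽ₚ`-brace of
cardinality `p^4`. -/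
theorem statement1 (p : ℕ) (hp : p.Prime) (A : Type*) [FpBrace p A]
    (hcard : Nat.card A = p ^ 4) :
    ∀ a b c : A,
      star (a⁻¹ * b⁻¹ * a * b) c =
        star a (star b c) - star b (star a c)
          + star a (star b (star a c)) + star b (star b (star a c))
          - star b (star a (star b c)) - star a (star a (star b c)) := by
  intro a b c
  have h5 := lpow_five_eq_bot hp hcard
  have hz : ∀ x ∈ lpow A 5, x = (0 : A) := fun x hx => by
    rwa [h5, AddSubgroup.mem_bot] at hx
  have hc : c ∈ lpow A 1 := by rw [lpow_one_eq_top]; trivial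
  set d := star a (star b c) - star b (star a c) with hd
  have hd3 : d ∈ lpow A 3 :=
    sub_mem (bstar_mem_lpow (bstar_mem_lpow hc b) a) (bstar_mem_lpow (bstar_mem_lpow hc a) b)
  set v := b * a with hv
  set e := blam v⁻¹ d with he
  have he3 : e ∈ lpow A 3 := blam_mem_lpow _ hd3
  have hve : blam v e = d := blam_inv' v d
  have hexpv : blam v e = e + star a e + star b e + star b (star a e) := by
    calc blam (b * a) e = blam b (blam a e) := blam_mul b a e
      _ = blam b (e + star a e) := by rw [blam_eq a e]
      _ = blam b e + blam b (star a e) := blam_add b e (star a e)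
      _ = (e + star b e) + (star a e + star b (star a e)) := by
          rw [blam_eq b e, blam_eq b (star a e)]
      _ = e + star a e + star b e + star b (star a e) := by abel
  have h5e : star b (star a e) = 0 :=
    hz _ (bstar_mem_lpow (bstar_mem_lpow he3 a) b)
  have heq1 : e = d - star a e - star b e := by
    rw [← hve, hexpv, h5e]
    abel
  have hsa : star a e = star a d := by
    conv_lhs => rw [heq1]
    rw [bstar_sub, bstar_sub,
      hz _ (bstar_mem_lpow (bstar_mem_lpow he3 a) a),
      hz _ (bstar_mem_lpow (bstar_mem_lpow he3 b) a)]
    abel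
  have hsb : star b e = star b d := by
    conv_lhs => rw [heq1]
    rw [bstar_sub, bstar_sub,
      hz _ (bstar_mem_lpow (bstar_mem_lpow he3 a) b),
      hz _ (bstar_mem_lpow (bstar_mem_lpow he3 b) b)]
    abel
  have heq2 : e = d - star a d - star b d := by rw [heq1, hsa, hsb]
  have hw : a⁻¹ * b⁻¹ * a * b = v⁻¹ * (a * b) := by
    rw [hv, mul_inv_rev, mul_assoc, mul_assoc]
  have hu : blam (a * b) c = blam v c + d := by
    have h1 : blam (a * b) c = c + star a c + star b c + star a (star b c) := by
      calc blam (a * b) c = blam a (blam b c) := blam_mul a b c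
        _ = blam a (c + star b c) := by rw [blam_eq b c]
        _ = blam a c + blam a (star b c) := blam_add a c (star b c)
        _ = (c + star a c) + (star b c + star a (star b c)) := by
            rw [blam_eq a c, blam_eq a (star b c)]
        _ = c + star a c + star b c + star a (star b c) := by abel
    have h2 : blam v c = c + star a c + star b c + star b (star a c) := by
      calc blam (b * a) c = blam b (blam a c) := blam_mul b a c
        _ = blam b (c + star a c) := by rw [blam_eq a c]
        _ = blam b c + blam b (star a c) := blam_add b c (star a c)
        _ = (c + star b c) + (star a c + star b (star a c)) := by
            rw [blam_eq b c, blam_eq b (star a c)]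
        _ = c + star a c + star b c + star b (star a c) := by abel
    rw [h1, h2, hd]
    abel
  have hstarw : star (a⁻¹ * b⁻¹ * a * b) c = e := by
    rw [bstar_eq, hw, blam_mul, hu, blam_add, blam_inv v c, ← he]
    abel
  rw [hstarw, heq2, hd, bstar_sub, bstar_sub]
  abel
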